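/- For every zigzag language L_n ⊆ S_n and any two consecutive permutations π, ρ in the sequence J(L_n), the permutation ρ is obtained from π by a left or right jump of some value, and this jump is minimal with respect to L_n. -/

import Mathlib

/-!
Shared definitions: permutations in one-line notation as lists of naturals,
deletion `p`, insertion `c_i`, zigzag languages, the Gray code sequence `J(L_n)`,
jumps, minimal jumps, the auxiliary sequences `s_n^π`, Algorithm M,
vincular pattern containment and 2-clumped permutations.
-/

/-- `S_n`: permutations of `{1,…,n}` in one-line notation, as lists of naturals. -/
def SymmList (n : ℕ) : Set (List ℕ) := {l | List.Perm l (List.range' 1 n)}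

/-- The identity permutation `id_n = 1 2 ⋯ n`. -/
def idPerm (n : ℕ) : List ℕ := List.range' 1 n

/-- `p(π)`: delete the largest entry `n = π.length` from the permutation `π ∈ S_n`. -/
def pdel (l : List ℕ) : List ℕ := l.erase l.length

/-- `c_i(π)`: insert the new largest value `π.length + 1` at (1-indexed) position `i`. -/
def cins (i : ℕ) (l : List ℕ) : List ℕ :=
  l.take (i - 1) ++ (l.length + 1) :: l.drop (i - 1)

/-- Zigzag languages of permutations: `L_0 = {ε}` is a zigzag language, and
`L ⊆ S_{n+1}` is a zigzag language if `p(L)` is a zigzag language and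
`c_1(π), c_{n+1}(π) ∈ L` for every `π ∈ p(L)`. -/
inductive IsZigzag : ℕ → Set (List ℕ) → Prop
  | zero : IsZigzag 0 {[]}
  | succ (n : ℕ) (L : Set (List ℕ)) :
      L ⊆ SymmList (n + 1) →
      IsZigzag n (pdel '' L) →
      (∀ l ∈ pdel '' L, cins 1 l ∈ L ∧ cins (n + 1) l ∈ L) →
      IsZigzag (n + 1) L

/-- `→c(π)`: the sequence of those `c_1(π),…,c_n(π)` lying in `L`,
in increasing order of the insertion position. -/
noncomputable def cSeq (L : Set (List ℕ)) (n : ℕ) (l : List ℕ) : List (List ℕ) :=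
  ((List.range' 1 n).map (fun i => cins i l)).filter
    (fun x => @decide (x ∈ L) (Classical.propDecidable _))

/-- The Gray code sequence `J(L_n)` of a language `L ⊆ S_n`:
`J(L_0) = ε`, and `J(L_{n+1})` is obtained from `J(L_n)` (for the language
`p(L)`) by replacing its entries alternately by `←c(π)` (the reverse of
`→c(π)`) and `→c(π)`. -/
noncomputable def Jseq : ℕ → Set (List ℕ) → List (List ℕ)
  | 0, _ => [[]]
  | (n + 1), L =>
      (((Jseq n (pdel '' L)).mapIdx
        (fun k π => if k % 2 = 0 then (cSeq L (n + 1) π).reverse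
                    else cSeq L (n + 1) π)).flatten)

/-- `ρ` is obtained from `π` by a right jump of the value `v` by `d` steps. -/
def RightJump (π ρ : List ℕ) (v d : ℕ) : Prop :=
  0 < d ∧ ∃ A B C : List ℕ, B.length = d ∧ (∀ x ∈ B, x < v) ∧
    π = A ++ v :: (B ++ C) ∧ ρ = A ++ (B ++ v :: C)

/-- `ρ` is obtained from `π` by a left jump of the value `v` by `d` steps. -/
def LeftJump (π ρ : List ℕ) (v d : ℕ) : Prop := RightJump ρ π v d

/-- A right jump that is minimal with respect to `L`: every right jump of the
same value by fewer steps yields a permutation not in `L`. -/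
def MinimalRightJump (L : Set (List ℕ)) (π ρ : List ℕ) (v d : ℕ) : Prop :=
  RightJump π ρ v d ∧ ∀ d' ρ', d' < d → RightJump π ρ' v d' → ρ' ∉ L

/-- A left jump that is minimal with respect to `L`. -/
def MinimalLeftJump (L : Set (List ℕ)) (π ρ : List ℕ) (v d : ℕ) : Prop :=
  LeftJump π ρ v d ∧ ∀ d' ρ', d' < d → LeftJump π ρ' v d' → ρ' ∉ L

/-- The auxiliary sequence `s_n^π` of a permutation `π` occurring in `J(L_n)`,
as a function of the index `i ∈ {1,…,n}` (value `0` outside this range). -/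
noncomputable def sVec : ℕ → Set (List ℕ) → List ℕ → ℕ → ℕ
  | 0, _, _, _ => 0
  | 1, _, _, i => if i = 1 then 1 else 0
  | (n + 2), L, π, i =>
      let L' := pdel '' L
      let π' := pdel π
      let cbar := if ((Jseq (n + 1) L').idxOf π') % 2 = 0
                  then (cSeq L (n + 2) π').reverse else cSeq L (n + 2) π'
      if cbar.getLast? = some π then
        (if i ≤ n then sVec (n + 1) L' π' i
         else if i = n + 1 then n + 1
         else if i = n + 2 then sVec (n + 1) L' π' (n + 1) else 0)
      else
        (if i ≤ n + 1 then sVec (n + 1) L' π' i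
         else if i = n + 2 then n + 2 else 0)

/-- `j` is at the first position of `l`, or the entry immediately left of `j`
in `l` is larger than `j`. -/
def AtLeftTurn (l : List ℕ) (j : ℕ) : Prop :=
  ∃ A B : List ℕ, l = A ++ j :: B ∧ (A = [] ∨ ∃ x, A.getLast? = some x ∧ j < x)

/-- `j` is at the last position of `l`, or the entry immediately right of `j`
in `l` is larger than `j`. -/
def AtRightTurn (l : List ℕ) (j : ℕ) : Prop :=
  ∃ A B : List ℕ, l = A ++ j :: B ∧ (B = [] ∨ ∃ x, B.head? = some x ∧ j < x)

/-- `j` is not at the first position of `l`, and the entry immediately left of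
`j` in `l` is smaller than `j`. -/
def SmallerLeftNeighbor (l : List ℕ) (j : ℕ) : Prop :=
  ∃ A B : List ℕ, ∃ x, l = A ++ j :: B ∧ A.getLast? = some x ∧ x < j

/-- `j` is not at the last position of `l`, and the entry immediately right of
`j` in `l` is smaller than `j`. -/
def SmallerRightNeighbor (l : List ℕ) (j : ℕ) : Prop :=
  ∃ A B : List ℕ, ∃ x, l = A ++ j :: B ∧ B.head? = some x ∧ x < j

/-- A state of Algorithm M: the current permutation `π` and the auxiliary
arrays `o` and `s`; `o j = false` encodes direction `L` (left) and
`o j = true` encodes `R` (right). -/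
structure MState where
  perm : List ℕ
  o : ℕ → Bool
  s : ℕ → ℕ

/-- The initial state of Algorithm M (step M1): `π = id_n`, `o_j = L`, `s_j = j`. -/
def MInit (n : ℕ) : MState := ⟨idPerm n, fun _ => false, fun j => j⟩

/-- One iteration (steps M3–M5) of Algorithm M on a language `L ⊆ S_n`:
with `j := s_n ≠ 1`, the permutation jumps minimally in the direction `o_j`
(step M4), and the arrays `o`, `s` are updated as in step M5. -/
def MStep (L : Set (List ℕ)) (n : ℕ) (σ σ' : MState) : Prop :=
  σ.s n ≠ 1 ∧
  σ'.perm ∈ L ∧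
  ((σ.o (σ.s n) = false ∧ ∃ d, MinimalLeftJump L σ.perm σ'.perm (σ.s n) d) ∨
   (σ.o (σ.s n) = true ∧ ∃ d, MinimalRightJump L σ.perm σ'.perm (σ.s n) d)) ∧
  (((σ.o (σ.s n) = false ∧ AtLeftTurn σ'.perm (σ.s n)) ∨
    (σ.o (σ.s n) = true ∧ AtRightTurn σ'.perm (σ.s n))) →
      σ'.o = Function.update σ.o (σ.s n) (!σ.o (σ.s n)) ∧
      σ'.s = Function.update (Function.update (Function.update σ.s n n) (σ.s n)
               ((Function.update σ.s n n) (σ.s n - 1))) (σ.s n - 1) (σ.s n - 1)) ∧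
  (¬ ((σ.o (σ.s n) = false ∧ AtLeftTurn σ'.perm (σ.s n)) ∨
      (σ.o (σ.s n) = true ∧ AtRightTurn σ'.perm (σ.s n))) →
      σ'.o = σ.o ∧ σ'.s = Function.update σ.s n n)

/-- `π` contains the vincular pattern `pat` whose marked adjacent pair starts
at (0-indexed) position `k` of `pat`. -/
def ContainsVincular (π pat : List ℕ) (k : ℕ) : Prop :=
  ∃ f : ℕ → ℕ, StrictMonoOn f (Set.Iio pat.length) ∧
    (∀ i < pat.length, f i < π.length) ∧
    f (k + 1) = f k + 1 ∧
    (∀ i < pat.length, ∀ j < pat.length,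
      (pat.getD i 0 < pat.getD j 0 ↔ π.getD (f i) 0 < π.getD (f j) 0))

/-- 2-clumped permutations: those avoiding the vincular patterns
`3(51)24`, `3(51)42`, `24(51)3` and `42(51)3`. -/
def TwoClumped (π : List ℕ) : Prop :=
  ¬ ContainsVincular π [3, 5, 1, 2, 4] 1 ∧ ¬ ContainsVincular π [3, 5, 1, 4, 2] 1 ∧
  ¬ ContainsVincular π [2, 4, 5, 1, 3] 2 ∧ ¬ ContainsVincular π [4, 2, 5, 1, 3] 2

/-- `S'_n`: the set of 2-clumped permutations in `S_n`. -/
def SClump (n : ℕ) : Set (List ℕ) := {l ∈ SymmList n | TwoClumped l}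

/-- `B_n`: the permutations obtained from `1` by repeatedly inserting the new
largest value at the first or the last position. -/
def Bset : ℕ → Set (List ℕ)
  | 0 => {[]}
  | 1 => {[1]}
  | (n + 2) => {l | ∃ π ∈ Bset (n + 1), l = cins 1 π ∨ l = cins (n + 2) π}

section AuxBasic
open List

lemma cins_one (l : List ℕ) : cins 1 l = (l.length + 1) :: l := by simp [cins]

lemma cins_last (l : List ℕ) : cins (l.length + 1) l = l ++ [l.length + 1] := by
  simp [cins]

lemma mem_symm_length {l : List ℕ} {n : ℕ} (h : l ∈ SymmList n) : l.length = n := by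
  have := h.length_eq; simpa using this

lemma mem_symm_lt {l : List ℕ} {n : ℕ} (h : l ∈ SymmList n) : ∀ x ∈ l, x < n + 1 := by
  intro x hx
  have : x ∈ List.range' 1 n := h.mem_iff.mp hx
  have := List.mem_range'_1.mp this
  omega

lemma pdel_symm {l : List ℕ} {n : ℕ} (h : l ∈ SymmList (n+1)) : pdel l ∈ SymmList n := by
  have hlen : l.length = n + 1 := mem_symm_length h
  have hperm : (l.erase (n+1)).Perm ((List.range' 1 (n+1)).erase (n+1)) := (h : l.Perm _).erase _
  have hr : (List.range' 1 (n+1)).erase (n+1) = List.range' 1 n := by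
    have : List.range' 1 (n+1) = List.range' 1 n ++ [n+1] := by
      have := (List.range'_concat : List.range' 1 (n+1) 1 = List.range' 1 n 1 ++ [1 + 1 * n])
      simpa [Nat.add_comm] using this
    rw [this, List.erase_append_right]
    · simp
    · intro hmem
      have := List.mem_range'_1.mp hmem
      omega
  rw [pdel, hlen]
  rw [hr] at hperm
  exact hperm

lemma rightJump_perm {π ρ : List ℕ} {v d : ℕ} (h : RightJump π ρ v d) : π.Perm ρ := by
  obtain ⟨-, A, B, C, -, -, rfl, rfl⟩ := h
  exact List.Perm.append_left A List.perm_middle.symm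

end AuxBasic
section AuxJump
open List

lemma split_unique {α : Type*} {v : α} :
    ∀ (A : List α) {A' B B' : List α}, v ∉ A → v ∉ A' →
      A ++ v :: B = A' ++ v :: B' → A = A' ∧ B = B' := by
  intro A
  induction A with
  | nil =>
    intro A' B B' _ hA' h
    cases A' with
    | nil => simpa using h
    | cons a t =>
      simp only [List.nil_append, List.cons_append, List.cons.injEq] at h
      exact absurd (h.1 ▸ (List.mem_cons_self : a ∈ a :: t)) hA'
  | cons a A ih =>
    intro A' B B' hA hA' h
    cases A' with
    | nil =>
      simp only [List.cons_append, List.nil_append, List.cons.injEq] at h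
      exact absurd (h.1 ▸ (List.mem_cons_self : a ∈ a :: A)) (h.1 ▸ hA)
    | cons a' A' =>
      simp only [List.cons_append, List.cons.injEq] at h
      obtain ⟨rfl, h2⟩ := h
      have := ih (fun hx => hA (List.mem_cons_of_mem _ hx))
        (fun hx => hA' (List.mem_cons_of_mem _ hx)) h2
      exact ⟨by rw [this.1], this.2⟩

lemma count_cins {π' : List ℕ} (hlt : ∀ x ∈ π', x < π'.length + 1) (i : ℕ) :
    List.count (π'.length + 1) (cins i π') = 1 := by
  have h1 : List.count (π'.length + 1) (π'.take (i-1)) = 0 :=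
    List.count_eq_zero.mpr (fun hx => lt_irrefl _ (hlt _ (List.mem_of_mem_take hx)))
  have h2 : List.count (π'.length + 1) (π'.drop (i-1)) = 0 :=
    List.count_eq_zero.mpr (fun hx => lt_irrefl _ (hlt _ (List.mem_of_mem_drop hx)))
  rw [cins, List.count_append, List.count_cons, h1, h2]
  simp

lemma not_mem_take_cins {π' : List ℕ} (hlt : ∀ x ∈ π', x < π'.length + 1) (m : ℕ) :
    (π'.length + 1) ∉ π'.take m :=
  fun hx => lt_irrefl _ (hlt _ (List.mem_of_mem_take hx))

/-- Existence: inserting at `i` then jumping right to `j`. -/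
lemma rightJump_cins {π' : List ℕ} (hlt : ∀ x ∈ π', x < π'.length + 1)
    {i j : ℕ} (h1 : 1 ≤ i) (hij : i < j) (hj : j ≤ π'.length + 1) :
    RightJump (cins i π') (cins j π') (π'.length + 1) (j - i) := by
  refine ⟨by omega, π'.take (i-1), (π'.drop (i-1)).take (j-i), π'.drop (j-1), ?_, ?_, ?_, ?_⟩
  · rw [List.length_take, List.length_drop]; omega
  · intro x hx; exact hlt x (List.mem_of_mem_drop (List.mem_of_mem_take hx))
  · rw [cins]
    congr 2
    symm
    have : (i-1) + (j-i) = j - 1 := by omega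
    calc (π'.drop (i-1)).take (j-i) ++ π'.drop (j-1)
        = (π'.drop (i-1)).take (j-i) ++ (π'.drop (i-1)).drop (j-i) := by
          rw [List.drop_drop, this]
      _ = π'.drop (i-1) := List.take_append_drop _ _
  · rw [cins]
    have ht : π'.take (j-1) = π'.take (i-1) ++ (π'.drop (i-1)).take (j-i) := by
      have : (j:ℕ) - 1 = (i-1) + (j-i) := by omega
      rw [this, List.take_add]
    rw [ht, List.append_assoc]

/-- Rigidity: any right jump of the maximal value from `cins i π'` lands at `cins (i+d') π'`. -/
lemma rightJump_cins_inv {π' : List ℕ} (hlt : ∀ x ∈ π', x < π'.length + 1)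
    {i d' : ℕ} {ρ' : List ℕ} (h1 : 1 ≤ i) (hi : i ≤ π'.length + 1)
    (h : RightJump (cins i π') ρ' (π'.length + 1) d') :
    ρ' = cins (i + d') π' ∧ i + d' ≤ π'.length + 1 := by
  obtain ⟨hd, A, B, C, hB, hBlt, hπ, hρ⟩ := h
  have hcount := count_cins hlt i
  rw [hπ, List.count_append, List.count_cons_self] at hcount
  have hvA : (π'.length + 1) ∉ A := List.count_eq_zero.mp (by omega)
  rw [cins] at hπ
  have hsplit := split_unique (π'.take (i-1)) (not_mem_take_cins hlt (i-1)) hvA hπ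
  obtain ⟨hA, hBC⟩ := hsplit
  have hlenBC : B.length + C.length = π'.length - (i-1) := by
    have := congrArg List.length hBC
    simp [List.length_drop] at this
    omega
  have hle : i + d' ≤ π'.length + 1 := by omega
  refine ⟨?_, hle⟩
  have hBeq : B = (π'.drop (i-1)).take d' := by
    rw [hBC, ← hB, List.take_left]
  have hCeq : C = (π'.drop (i-1)).drop d' := by
    rw [hBC, ← hB, List.drop_left]
  rw [hρ, ← hA, hBeq, hCeq, cins]
  have ht : π'.take (i + d' - 1) = π'.take (i-1) ++ (π'.drop (i-1)).take d' := by
    have : i + d' - 1 = (i-1) + d' := by omega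
    rw [this, List.take_add]
  have hd2 : π'.drop (i + d' - 1) = (π'.drop (i-1)).drop d' := by
    rw [List.drop_drop]; congr 1; omega
  rw [ht, hd2, List.append_assoc]

/-- Rigidity for left jumps: a left jump of the maximal value into `cins j π'`. -/
lemma leftJump_cins_inv {π' : List ℕ} (hlt : ∀ x ∈ π', x < π'.length + 1)
    {j d' : ℕ} {ρ' : List ℕ} (h1 : 1 ≤ j) (hj : j ≤ π'.length + 1)
    (h : RightJump ρ' (cins j π') (π'.length + 1) d') :
    ρ' = cins (j - d') π' ∧ d' < j := by
  obtain ⟨hd, A, B, C, hB, hBlt, hρ, hπ⟩ := h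
  have hcount := count_cins hlt j
  rw [hπ, List.count_append, List.count_append, List.count_cons_self] at hcount
  have hvA : (π'.length+1) ∉ A := List.count_eq_zero.mp (by omega)
  have hvB : (π'.length+1) ∉ B := fun hx => lt_irrefl _ (hBlt _ hx)
  have hvAB : (π'.length+1) ∉ A ++ B := by simp [hvA, hvB]
  have hπ' : (A ++ B) ++ (π'.length+1) :: C = π'.take (j-1) ++ (π'.length+1) :: π'.drop (j-1) := by
    rw [List.append_assoc, ← hπ, cins]
  have hsplit := split_unique (A ++ B) hvAB (not_mem_take_cins hlt (j-1)) hπ'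
  obtain ⟨hAB, hC⟩ := hsplit
  have hjlen : j - 1 ≤ π'.length := by omega
  have hlenAB : A.length + d' = j - 1 := by
    have := congrArg List.length hAB
    simp [List.length_take] at this
    omega
  have hd'j : d' < j := by omega
  refine ⟨?_, hd'j⟩
  have hAeq : A = π'.take (j - 1 - d') := by
    have : A = (A ++ B).take A.length := by rw [List.take_left]
    rw [this, hAB, List.take_take]
    congr 1
    omega
  have hBeq : B = (π'.take (j-1)).drop (j - 1 - d') := by
    have : B = (A ++ B).drop A.length := by rw [List.drop_left]
    rw [this, hAB]
    congr 1
    omega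
  have hBC : B ++ C = π'.drop (j - 1 - d') := by
    rw [hBeq, hC]
    rw [show π'.drop (j-1-d') = ((π'.take (j-1)) ++ π'.drop (j-1)).drop (j-1-d') by
      rw [List.take_append_drop]]
    rw [List.drop_append_of_le_length]
    rw [List.length_take]
    omega
  rw [hρ, hAeq, hBC, cins]
  have h1' : j - d' - 1 = j - 1 - d' := by omega
  rw [h1']

end AuxJump
section AuxLift
open List

lemma rj_cons {a b : List ℕ} {v d N : ℕ} (h : RightJump a b v d) :
    RightJump (N :: a) (N :: b) v d := by
  obtain ⟨hd, A, B, C, hB, hBlt, rfl, rfl⟩ := h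
  exact ⟨hd, N :: A, B, C, hB, hBlt, rfl, rfl⟩

lemma rj_concat {a b : List ℕ} {v d N : ℕ} (h : RightJump a b v d) :
    RightJump (a ++ [N]) (b ++ [N]) v d := by
  obtain ⟨hd, A, B, C, hB, hBlt, rfl, rfl⟩ := h
  refine ⟨hd, A, B, C ++ [N], hB, hBlt, by simp, by simp⟩

/-- Inverting a right jump starting from `N :: a` (with `v ≠ N`). -/
lemma rj_cons_inv {a b : List ℕ} {v d N : ℕ} (hv : v ≠ N)
    (h : RightJump (N :: a) b v d) : ∃ b', b = N :: b' ∧ RightJump a b' v d := by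
  obtain ⟨hd, A, B, C, hB, hBlt, hπ, rfl⟩ := h
  cases A with
  | nil => simp only [List.nil_append, List.cons.injEq] at hπ; exact absurd hπ.1.symm hv
  | cons x A =>
    simp only [List.cons_append, List.cons.injEq] at hπ
    obtain ⟨rfl, rfl⟩ := hπ
    exact ⟨A ++ (B ++ v :: C), rfl, hd, A, B, C, hB, hBlt, rfl, rfl⟩

/-- Inverting a right jump ending at `N :: a` (with `v < N`). -/
lemma rj_cons_inv2 {a b : List ℕ} {v d N : ℕ} (hv : v < N)
    (h : RightJump b (N :: a) v d) : ∃ b', b = N :: b' ∧ RightJump b' a v d := by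
  obtain ⟨hd, A, B, C, hB, hBlt, rfl, hπ⟩ := h
  cases A with
  | nil =>
    cases B with
    | nil => simp only [List.nil_append, List.cons.injEq] at hπ; omega
    | cons x B =>
      simp only [List.nil_append, List.cons_append, List.cons.injEq] at hπ
      have : x < v := hBlt x (by simp)
      omega
  | cons x A =>
    simp only [List.cons_append, List.cons.injEq] at hπ
    obtain ⟨rfl, rfl⟩ := hπ
    exact ⟨A ++ v :: (B ++ C), rfl, hd, A, B, C, hB, hBlt, rfl, rfl⟩

/-- Inverting a right jump starting from `a ++ [N]` (with `v < N`). -/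
lemma rj_concat_inv {a b : List ℕ} {v d N : ℕ} (hv : v < N)
    (h : RightJump (a ++ [N]) b v d) : ∃ b', b = b' ++ [N] ∧ RightJump a b' v d := by
  obtain ⟨hd, A, B, C, hB, hBlt, hπ, rfl⟩ := h
  rcases C.eq_nil_or_concat with rfl | ⟨C', c, rfl⟩
  · rcases B.eq_nil_or_concat with rfl | ⟨B', x, rfl⟩
    · have : a ++ [N] = A ++ [v] := by simpa using hπ
      have := (List.append_inj' this (by simp)).2
      simp at this; omega
    · have : a ++ [N] = (A ++ v :: B') ++ [x] := by simpa [List.append_assoc] using hπ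
      have hx := (List.append_inj' this (by simp)).2
      simp at hx
      have : x < v := hBlt x (by simp)
      omega
  · have : a ++ [N] = (A ++ v :: (B ++ C')) ++ [c] := by
      simpa [List.append_assoc] using hπ
    obtain ⟨ha, hc⟩ := List.append_inj' this (by simp)
    obtain ⟨rfl, -⟩ : N = c ∧ True := by simpa using hc
    subst ha
    exact ⟨A ++ (B ++ v :: C'), by simp [List.append_assoc, List.concat_eq_append], hd, A, B, C', hB, hBlt, rfl, rfl⟩

/-- Inverting a right jump ending at `a ++ [N]` (with `v < N`). -/
lemma rj_concat_inv2 {a b : List ℕ} {v d N : ℕ} (hv : v < N)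
    (h : RightJump b (a ++ [N]) v d) : ∃ b', b = b' ++ [N] ∧ RightJump b' a v d := by
  obtain ⟨hd, A, B, C, hB, hBlt, rfl, hπ⟩ := h
  rcases C.eq_nil_or_concat with rfl | ⟨C', c, rfl⟩
  · have : a ++ [N] = (A ++ B) ++ [v] := by simpa [List.append_assoc] using hπ
    have := (List.append_inj' this (by simp)).2
    simp at this; omega
  · have : a ++ [N] = (A ++ (B ++ v :: C')) ++ [c] := by
      simpa [List.append_assoc] using hπ
    obtain ⟨ha, hc⟩ := List.append_inj' this (by simp)
    obtain ⟨rfl, -⟩ : N = c ∧ True := by simpa using hc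
    subst ha
    exact ⟨A ++ v :: (B ++ C'), by simp [List.append_assoc, List.concat_eq_append], hd, A, B, C', hB, hBlt, rfl, rfl⟩

lemma pdel_cons {σ : List ℕ} : pdel ((σ.length + 1) :: σ) = σ := by
  rw [pdel]
  simp

lemma pdel_concat {σ : List ℕ} (h : ∀ x ∈ σ, x < σ.length + 1) :
    pdel (σ ++ [σ.length + 1]) = σ := by
  rw [pdel]
  simp only [List.length_append, List.length_cons, List.length_nil]
  rw [List.erase_append_right]
  · simp
  · intro hx; exact absurd (h _ hx) (by simp)

end AuxLift
section AuxMinLift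
open List

lemma lift_front {L : Set (List ℕ)} {π₁ π₂ : List ℕ} {v d n : ℕ}
    (hlen1 : π₁.length = n) (hlen2 : π₂.length = n) (hv : v ≤ n)
    (h : MinimalLeftJump (pdel '' L) π₁ π₂ v d ∨ MinimalRightJump (pdel '' L) π₁ π₂ v d) :
    MinimalLeftJump L (cins 1 π₁) (cins 1 π₂) v d ∨
      MinimalRightJump L (cins 1 π₁) (cins 1 π₂) v d := by
  have h1 : cins 1 π₁ = (n+1) :: π₁ := by rw [cins_one, hlen1]
  have h2 : cins 1 π₂ = (n+1) :: π₂ := by rw [cins_one, hlen2]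
  rw [h1, h2]
  rcases h with ⟨hj, hmin⟩ | ⟨hj, hmin⟩
  · refine Or.inl ⟨rj_cons hj, ?_⟩
    intro d' ρ' hd' hjump hmem
    obtain ⟨σ, rfl, hσ⟩ := rj_cons_inv2 (show v < n+1 by omega) hjump
    have hσlen : σ.length = n := by rw [(rightJump_perm hσ).length_eq, hlen1]
    have : pdel ((n+1) :: σ) = σ := by rw [← hσlen]; exact pdel_cons
    exact hmin d' σ hd' hσ (this ▸ Set.mem_image_of_mem pdel hmem)
  · refine Or.inr ⟨rj_cons hj, ?_⟩
    intro d' ρ' hd' hjump hmem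
    obtain ⟨σ, rfl, hσ⟩ := rj_cons_inv (show v ≠ n+1 by omega) hjump
    have hσlen : σ.length = n := by rw [← (rightJump_perm hσ).length_eq, hlen1]
    have : pdel ((n+1) :: σ) = σ := by rw [← hσlen]; exact pdel_cons
    exact hmin d' σ hd' hσ (this ▸ Set.mem_image_of_mem pdel hmem)

lemma lift_back {L : Set (List ℕ)} {π₁ π₂ : List ℕ} {v d n : ℕ}
    (hlen1 : π₁.length = n) (hlen2 : π₂.length = n) (hv : v ≤ n)
    (hlt1 : ∀ x ∈ π₁, x < n + 1)
    (h : MinimalLeftJump (pdel '' L) π₁ π₂ v d ∨ MinimalRightJump (pdel '' L) π₁ π₂ v d) :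
    MinimalLeftJump L (cins (n+1) π₁) (cins (n+1) π₂) v d ∨
      MinimalRightJump L (cins (n+1) π₁) (cins (n+1) π₂) v d := by
  have h1 : cins (n+1) π₁ = π₁ ++ [n+1] := by rw [← hlen1, cins_last]
  have h2 : cins (n+1) π₂ = π₂ ++ [n+1] := by rw [← hlen2, cins_last]
  rw [h1, h2]
  have hpd : ∀ σ : List ℕ, σ.Perm π₁ → pdel (σ ++ [n+1]) = σ := by
    intro σ hp
    have hσlen : σ.length = n := by rw [hp.length_eq, hlen1]
    have hσlt : ∀ x ∈ σ, x < σ.length + 1 := by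
      intro x hx; rw [hσlen]; exact hlt1 x (hp.mem_iff.mp hx)
    rw [show (n:ℕ)+1 = σ.length + 1 by rw [hσlen]]
    exact pdel_concat hσlt
  rcases h with ⟨hj, hmin⟩ | ⟨hj, hmin⟩
  · refine Or.inl ⟨rj_concat hj, ?_⟩
    intro d' ρ' hd' hjump hmem
    obtain ⟨σ, rfl, hσ⟩ := rj_concat_inv2 (show v < n+1 by omega) hjump
    exact hmin d' σ hd' hσ ((hpd σ (rightJump_perm hσ)) ▸ Set.mem_image_of_mem pdel hmem)
  · refine Or.inr ⟨rj_concat hj, ?_⟩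
    intro d' ρ' hd' hjump hmem
    obtain ⟨σ, rfl, hσ⟩ := rj_concat_inv (show v < n+1 by omega) hjump
    exact hmin d' σ hd' hσ ((hpd σ (rightJump_perm hσ).symm) ▸ Set.mem_image_of_mem pdel hmem)

end AuxMinLift
section AuxStruct
open List

/-- The filter predicate used by `cSeq`, pushed through the map. -/
noncomputable def cq (L : Set (List ℕ)) (π' : List ℕ) : ℕ → Bool :=
  fun i => @decide (cins i π' ∈ L) (Classical.propDecidable _)

lemma cSeq_eq (L : Set (List ℕ)) (m : ℕ) (π' : List ℕ) :
    cSeq L m π' = ((List.range' 1 m).filter (cq L π')).map (fun i => cins i π') := by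
  rw [cSeq, List.filter_map]
  rfl

lemma cSeq_head {L : Set (List ℕ)} {n : ℕ} {π' : List ℕ} (h1 : cins 1 π' ∈ L) :
    (cSeq L (n+1) π').head? = some (cins 1 π') := by
  rw [cSeq_eq]
  rw [show List.range' 1 (n+1) = 1 :: List.range' 2 n from (List.range'_succ : List.range' 1 (n+1) 1 = 1 :: List.range' (1+1) n 1)]
  rw [List.filter_cons_of_pos (by simp [cq, h1])]
  simp

lemma cSeq_last {L : Set (List ℕ)} {n : ℕ} {π' : List ℕ} (h2 : cins (n+1) π' ∈ L) :
    (cSeq L (n+1) π').getLast? = some (cins (n+1) π') := by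
  rw [cSeq_eq, List.getLast?_map, ← List.head?_reverse, ← List.filter_reverse]
  have hr : (List.range' 1 (n+1)).reverse = (n+1) :: (List.range' 1 n).reverse := by
    have := (List.range'_concat : List.range' 1 (n+1) 1 = List.range' 1 n 1 ++ [1 + 1 * n])
    rw [show (1 + 1 * n : ℕ) = n + 1 by omega] at this
    rw [this]
    simp
  rw [hr, List.filter_cons_of_pos (by simp [cq, h2])]
  simp

lemma filter_range'_consec {m : ℕ} {q : ℕ → Bool} {k i j : ℕ}
    (hi : ((List.range' 1 m).filter q)[k]? = some i)
    (hj : ((List.range' 1 m).filter q)[k+1]? = some j) :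
    1 ≤ i ∧ i < j ∧ j ≤ m ∧ ∀ t, i < t → t < j → q t = false := by
  set F := (List.range' 1 m).filter q with hF
  obtain ⟨hk, hik⟩ := List.getElem?_eq_some_iff.mp hi
  obtain ⟨hk1, hjk⟩ := List.getElem?_eq_some_iff.mp hj
  have hpw : F.Pairwise (· < ·) :=
    List.Pairwise.sublist List.filter_sublist (List.pairwise_lt_range' : (List.range' 1 m).Pairwise (· < ·))
  have hmono := List.pairwise_iff_getElem.mp hpw
  have hij : i < j := by
    have := hmono k (k+1) hk hk1 (by omega)
    rw [hik, hjk] at this; exact this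
  have hiF : i ∈ F := hik ▸ List.getElem_mem hk
  have hjF : j ∈ F := hjk ▸ List.getElem_mem hk1
  have hir := (List.mem_filter.mp hiF).1
  have hjr := (List.mem_filter.mp hjF).1
  have hi1 : 1 ≤ i := (List.mem_range'_1.mp hir).1
  have hjm : j ≤ m := by have := (List.mem_range'_1.mp hjr).2; omega
  refine ⟨hi1, hij, hjm, ?_⟩
  intro t hit htj
  by_contra hq
  have hqt : q t = true := by
    cases hqt : q t with
    | false => exact absurd hqt hq
    | true => rfl
  have htF : t ∈ F := List.mem_filter.mpr ⟨List.mem_range'_1.mpr ⟨by omega, by omega⟩, hqt⟩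
  obtain ⟨k'', hk'', htk⟩ := List.getElem_of_mem htF
  have h1 : k < k'' := by
    by_contra hle
    rcases Nat.lt_or_ge k'' k with hlt | hge
    · have := hmono k'' k hk'' hk hlt
      rw [hik, htk] at this; omega
    · have : k'' = k := by omega
      subst this; rw [hik] at htk; omega
  have h2 : k'' < k + 1 := by
    by_contra hle
    rcases Nat.lt_or_ge (k+1) k'' with hlt | hge
    · have := hmono (k+1) k'' hk1 hk'' hlt
      rw [hjk, htk] at this; omega
    · have : k'' = k + 1 := by omega
      subst this; rw [hjk] at htk; omega
  omega

lemma cSeq_consec {L : Set (List ℕ)} {n : ℕ} {π' : List ℕ} {k : ℕ} {a b : List ℕ}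
    (ha : (cSeq L (n+1) π')[k]? = some a) (hb : (cSeq L (n+1) π')[k+1]? = some b) :
    ∃ i j, 1 ≤ i ∧ i < j ∧ j ≤ n+1 ∧ a = cins i π' ∧ b = cins j π' ∧
      ∀ t, i < t → t < j → cins t π' ∉ L := by
  rw [cSeq_eq] at ha hb
  rw [List.getElem?_map] at ha hb
  obtain ⟨i, hifil, hai⟩ : ∃ i, ((List.range' 1 (n+1)).filter (cq L π'))[k]? = some i ∧ a = cins i π' := by
    cases hx : ((List.range' 1 (n+1)).filter (cq L π'))[k]? with
    | none => rw [hx] at ha; simp at ha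
    | some i => rw [hx] at ha; exact ⟨i, rfl, by simpa using ha.symm⟩
  obtain ⟨j, hjfil, hbj⟩ : ∃ j, ((List.range' 1 (n+1)).filter (cq L π'))[k+1]? = some j ∧ b = cins j π' := by
    cases hx : ((List.range' 1 (n+1)).filter (cq L π'))[k+1]? with
    | none => rw [hx] at hb; simp at hb
    | some j => rw [hx] at hb; exact ⟨j, rfl, by simpa using hb.symm⟩
  obtain ⟨h1, hij, hjm, hmid⟩ := filter_range'_consec hifil hjfil
  refine ⟨i, j, h1, hij, hjm, hai, hbj, ?_⟩
  intro t hit htj hmem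
  have := hmid t hit htj
  rw [cq] at this
  simp only [decide_eq_false_iff_not] at this
  exact this hmem

lemma reverse_consec {α : Type*} {l : List α} {k : ℕ} {a b : α}
    (ha : l.reverse[k]? = some a) (hb : l.reverse[k+1]? = some b) :
    ∃ k', l[k']? = some b ∧ l[k'+1]? = some a := by
  obtain ⟨hk1, -⟩ := List.getElem?_eq_some_iff.mp hb
  rw [List.length_reverse] at hk1
  have hk : k < l.length := by omega
  rw [List.getElem?_reverse (by omega)] at ha
  rw [List.getElem?_reverse (by omega)] at hb
  refine ⟨l.length - 1 - (k+1), hb, ?_⟩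
  rw [show l.length - 1 - (k+1) + 1 = l.length - 1 - k by omega]
  exact ha

lemma flatten_consec {α : Type*} :
    ∀ (ll : List (List α)), (∀ l ∈ ll, l ≠ []) → ∀ (k : ℕ) (a b : α),
    ll.flatten[k]? = some a → ll.flatten[k+1]? = some b →
    (∃ (m : ℕ) (blk : List α) (i : ℕ), ll[m]? = some blk ∧ blk[i]? = some a ∧ blk[i+1]? = some b) ∨
    (∃ (m : ℕ) (blk blk' : List α), ll[m]? = some blk ∧ ll[m+1]? = some blk' ∧
       blk.getLast? = some a ∧ blk'.head? = some b) := by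
  intro ll
  induction ll with
  | nil => intro _ k a b ha _; simp at ha
  | cons c rest ih =>
    intro hne k a b ha hb
    rw [List.flatten_cons] at ha hb
    rcases Nat.lt_or_ge (k+1) c.length with hlt | hge
    · rw [List.getElem?_append, if_pos (by omega)] at ha
      rw [List.getElem?_append, if_pos hlt] at hb
      exact Or.inl ⟨0, c, k, by simp, ha, hb⟩
    · rcases Nat.lt_or_ge k c.length with hlt2 | hge2
      · -- k = c.length - 1, boundary
        have hck : c.length = k + 1 := by omega
        rw [List.getElem?_append, if_pos hlt2] at ha
        rw [List.getElem?_append, if_neg (by omega)] at hb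
        rw [show k + 1 - c.length = 0 by omega] at hb
        cases rest with
        | nil => simp at hb
        | cons c' rest' =>
          rw [List.flatten_cons, List.getElem?_append, if_pos] at hb
          · refine Or.inr ⟨0, c, c', by simp, by simp, ?_, ?_⟩
            · rw [List.getLast?_eq_getElem?, hck]
              simpa using ha
            · rw [List.head?_eq_getElem?]
              exact hb
          · have : c' ≠ [] := hne c' (by simp)
            have := List.length_pos_iff.mpr this
            omega
      · rw [List.getElem?_append, if_neg (by omega)] at ha
        rw [List.getElem?_append, if_neg (by omega)] at hb
        rw [show k + 1 - c.length = (k - c.length) + 1 by omega] at hb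
        have := ih (fun l hl => hne l (by simp [hl])) (k - c.length) a b ha hb
        rcases this with ⟨m, blk, i, h1, h2, h3⟩ | ⟨m, blk, blk', h1, h2, h3, h4⟩
        · exact Or.inl ⟨m + 1, blk, i, by simpa using h1, h2, h3⟩
        · exact Or.inr ⟨m + 1, blk, blk', by simpa using h1, by simpa using h2, h3, h4⟩

/-- Every entry of `J(L_n)` lies in `L_n`. -/
lemma Jseq_mem {n : ℕ} {L : Set (List ℕ)} (h : IsZigzag n L) :
    ∀ π ∈ Jseq n L, π ∈ L := by
  cases h with
  | zero => intro π hπ; simp only [Jseq, List.mem_singleton] at hπ; subst hπ; rfl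
  | succ n L hsub hz hcl =>
    intro π hπ
    rw [Jseq] at hπ
    obtain ⟨blk, hblk, hπblk⟩ := List.mem_flatten.mp hπ
    obtain ⟨m, hm⟩ := List.getElem?_of_mem hblk
    rw [List.getElem?_mapIdx] at hm
    cases hJ : (Jseq n (pdel '' L))[m]? with
    | none => rw [hJ] at hm; simp at hm
    | some π' =>
      rw [hJ] at hm
      simp only [Option.map_some] at hm
      have hblk' : blk = if m % 2 = 0 then (cSeq L (n+1) π').reverse else cSeq L (n+1) π' := by
        injection hm with h; exact h.symm
      have hπc : π ∈ cSeq L (n+1) π' := by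
        subst hblk'
        by_cases hpar : m % 2 = 0
        · rw [if_pos hpar] at hπblk; exact List.mem_reverse.mp hπblk
        · rw [if_neg hpar] at hπblk; exact hπblk
      rw [cSeq] at hπc
      have h2 := (List.mem_filter.mp hπc).2
      simp only [decide_eq_true_eq] at h2
      exact h2

end AuxStruct
section AuxWithin
open List

lemma within_forward {L : Set (List ℕ)} {n : ℕ} {π' : List ℕ}
    (hlt : ∀ x ∈ π', x < n + 1) (hlen : π'.length = n)
    {i j : ℕ} (h1 : 1 ≤ i) (hij : i < j) (hj : j ≤ n + 1)
    (hmid : ∀ t, i < t → t < j → cins t π' ∉ L) :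
    MinimalRightJump L (cins i π') (cins j π') (n+1) (j - i) := by
  subst hlen
  refine ⟨rightJump_cins hlt h1 hij hj, ?_⟩
  intro d' ρ' hd' hRJ
  have hd0 : 0 < d' := hRJ.1
  obtain ⟨rfl, hle⟩ := rightJump_cins_inv hlt h1 (by omega) hRJ
  exact hmid (i + d') (by omega) (by omega)

lemma within_backward {L : Set (List ℕ)} {n : ℕ} {π' : List ℕ}
    (hlt : ∀ x ∈ π', x < n + 1) (hlen : π'.length = n)
    {i j : ℕ} (h1 : 1 ≤ i) (hij : i < j) (hj : j ≤ n + 1)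
    (hmid : ∀ t, i < t → t < j → cins t π' ∉ L) :
    MinimalLeftJump L (cins j π') (cins i π') (n+1) (j - i) := by
  subst hlen
  refine ⟨(rightJump_cins hlt h1 hij hj : RightJump _ _ _ _), ?_⟩
  intro d' ρ' hd' hLJ
  have hd0 : 0 < d' := hLJ.1
  obtain ⟨rfl, hd'j⟩ := leftJump_cins_inv hlt (by omega) hj hLJ
  exact hmid (j - d') (by omega) (by omega)

end AuxWithin
/-- For every zigzag language `L_n ⊆ S_n` and any two consecutive
permutations `π, ρ` in `J(L_n)`, the permutation `ρ` is obtained from `π` by a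
left or right jump of some value, and this jump is minimal with respect to `L_n`. -/
theorem Jseq_consecutive_minimal_jump (n : ℕ) (L : Set (List ℕ)) (hL : IsZigzag n L)
    (k : ℕ) (π ρ : List ℕ)
    (hπ : (Jseq n L)[k]? = some π) (hρ : (Jseq n L)[k + 1]? = some ρ) :
    ∃ v d, MinimalLeftJump L π ρ v d ∨ MinimalRightJump L π ρ v d := by
  revert k π ρ hπ hρ
  induction hL with
  | zero =>
    intro k π ρ hπ hρ
    rw [Jseq] at hρ
    simp at hρ
  | succ n L hsub hz hcl ih =>
    intro k π ρ hπ hρ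
    rw [Jseq] at hπ hρ
    have hmemJ : ∀ σ ∈ Jseq n (pdel '' L), σ ∈ pdel '' L := Jseq_mem hz
    have hLsub' : ∀ σ ∈ pdel '' L, σ ∈ SymmList n := by
      rintro σ ⟨m, hmL, rfl⟩; exact pdel_symm (hsub hmL)
    -- the block extraction helper
    have hget : ∀ (m : ℕ) (blk : List (List ℕ)),
        ((Jseq n (pdel '' L)).mapIdx
          (fun k π => if k % 2 = 0 then (cSeq L (n + 1) π).reverse
                      else cSeq L (n + 1) π))[m]? = some blk →
        ∃ π', (Jseq n (pdel '' L))[m]? = some π' ∧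
          blk = (if m % 2 = 0 then (cSeq L (n + 1) π').reverse else cSeq L (n + 1) π') := by
      intro m blk hm
      rw [List.getElem?_mapIdx] at hm
      cases hJ : (Jseq n (pdel '' L))[m]? with
      | none => rw [hJ] at hm; simp at hm
      | some π' =>
        rw [hJ] at hm
        simp only [Option.map_some] at hm
        exact ⟨π', rfl, by injection hm with h; exact h.symm⟩
    have hne : ∀ blk ∈ ((Jseq n (pdel '' L)).mapIdx
        (fun k π => if k % 2 = 0 then (cSeq L (n + 1) π).reverse
                    else cSeq L (n + 1) π)), blk ≠ [] := by
      intro blk hblk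
      obtain ⟨m, hm⟩ := List.getElem?_of_mem hblk
      obtain ⟨π', hJ, hblk'⟩ := hget m blk hm
      have hπ'J : π' ∈ Jseq n (pdel '' L) := by
        obtain ⟨hlt, he⟩ := List.getElem?_eq_some_iff.mp hJ
        exact he ▸ List.getElem_mem hlt
      have hπ'L : π' ∈ pdel '' L := hmemJ _ hπ'J
      have hhead := cSeq_head (L := L) (n := n) (π' := π') (hcl _ hπ'L).1
      intro hnil
      rw [hnil] at hblk'
      by_cases hpar : m % 2 = 0
      · rw [if_pos hpar] at hblk'
        have : cSeq L (n+1) π' = [] := by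
          have := congrArg List.reverse hblk'; simpa using this
        rw [this] at hhead; simp at hhead
      · rw [if_neg hpar] at hblk'
        rw [← hblk'] at hhead; simp at hhead
    rcases flatten_consec _ hne k π ρ hπ hρ with
      ⟨m, blk, i0, hm, ha, hb⟩ | ⟨m, blk, blk', hm, hm1, hlast, hhead⟩
    · -- within one block
      obtain ⟨π', hJ, hblk'⟩ := hget m blk hm
      have hπ'L : π' ∈ pdel '' L := hmemJ _ (by
        obtain ⟨hlt, he⟩ := List.getElem?_eq_some_iff.mp hJ
        exact he ▸ List.getElem_mem hlt)
      have hsym := hLsub' _ hπ'L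
      have hlen : π'.length = n := mem_symm_length hsym
      have hlt : ∀ x ∈ π', x < n + 1 := by
        intro x hx; exact mem_symm_lt hsym x hx
      by_cases hpar : m % 2 = 0
      · rw [if_pos hpar] at hblk'
        subst hblk'
        obtain ⟨k', ha', hb'⟩ := reverse_consec ha hb
        obtain ⟨i, j, h1, hij, hj, hρi, hπj, hmid⟩ := cSeq_consec ha' hb'
        subst hρi hπj
        exact ⟨n+1, j - i, Or.inl (within_backward hlt hlen h1 hij hj hmid)⟩
      · rw [if_neg hpar] at hblk'
        subst hblk'
        obtain ⟨i, j, h1, hij, hj, hπi, hρj, hmid⟩ := cSeq_consec ha hb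
        subst hπi hρj
        exact ⟨n+1, j - i, Or.inr (within_forward hlt hlen h1 hij hj hmid)⟩
    · -- boundary between two blocks
      obtain ⟨π₁', hJ1, hblk1⟩ := hget m blk hm
      obtain ⟨π₂', hJ2, hblk2⟩ := hget (m+1) blk' hm1
      have hπ₁L : π₁' ∈ pdel '' L := hmemJ _ (by
        obtain ⟨hlt, he⟩ := List.getElem?_eq_some_iff.mp hJ1
        exact he ▸ List.getElem_mem hlt)
      have hπ₂L : π₂' ∈ pdel '' L := hmemJ _ (by
        obtain ⟨hlt, he⟩ := List.getElem?_eq_some_iff.mp hJ2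
        exact he ▸ List.getElem_mem hlt)
      have hlen1 : π₁'.length = n := mem_symm_length (hLsub' _ hπ₁L)
      have hlen2 : π₂'.length = n := mem_symm_length (hLsub' _ hπ₂L)
      have hlt1 : ∀ x ∈ π₁', x < n + 1 := fun x hx => mem_symm_lt (hLsub' _ hπ₁L) x hx
      obtain ⟨v, d, hmin⟩ := ih m π₁' π₂' hJ1 hJ2
      have hv : v ≤ n := by
        have hvmem : v ∈ π₁' := by
          rcases hmin with ⟨⟨-, A, B, C, -, -, -, h⟩, -⟩ | ⟨⟨-, A, B, C, -, -, h, -⟩, -⟩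
          · rw [h]; simp
          · rw [h]; simp
        have := mem_symm_lt (hLsub' _ hπ₁L) v hvmem
        omega
      by_cases hpar : m % 2 = 0
      · have hpar1 : ¬ ((m+1) % 2 = 0) := by omega
        rw [if_pos hpar] at hblk1
        rw [if_neg hpar1] at hblk2
        have hπeq : π = cins 1 π₁' := by
          rw [hblk1, List.getLast?_reverse] at hlast
          have := cSeq_head (L := L) (n := n) (π' := π₁') (hcl _ hπ₁L).1
          rw [this] at hlast
          injection hlast with h; exact h.symm
        have hρeq : ρ = cins 1 π₂' := by
          rw [hblk2] at hhead
          have := cSeq_head (L := L) (n := n) (π' := π₂') (hcl _ hπ₂L).1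
          rw [this] at hhead
          injection hhead with h; exact h.symm
        subst hπeq hρeq
        exact ⟨v, d, lift_front hlen1 hlen2 hv hmin⟩
      · have hpar1 : (m+1) % 2 = 0 := by omega
        rw [if_neg hpar] at hblk1
        rw [if_pos hpar1] at hblk2
        have hπeq : π = cins (n+1) π₁' := by
          rw [hblk1] at hlast
          have := cSeq_last (L := L) (n := n) (π' := π₁') (hcl _ hπ₁L).2
          rw [this] at hlast
          injection hlast with h; exact h.symm
        have hρeq : ρ = cins (n+1) π₂' := by
          rw [hblk2, List.head?_reverse] at hhead
          have := cSeq_last (L := L) (n := n) (π' := π₂') (hcl _ hπ₂L).2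
          rw [this] at hhead
          injection hhead with h; exact h.symm
        subst hπeq hρeq
        exact ⟨v, d, lift_back hlen1 hlen2 hv hlt1 hmin⟩
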